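/- Let D be a positive integer, let Q : ℝ^D → ℝ be differentiable at a point θ', and let θ ∈ ℝ^D satisfy Q(θ) ≤ Q(θ'). Then, as α tends to 1 from the left, the scaled skewed quasiconvex Jensen divergence (1/(α(1−α)))·(max(Q(θ), Q(θ')) − Q((1−α)·θ + α·θ')) tends to −(DQ(θ'))(θ − θ'), i.e., to the negative of the derivative of Q at θ' evaluated in the direction θ − θ'. -/

import Mathlib

open Filter Set

theorem quasiconvex_bregman_limit_finite_case
    (D : ℕ) (hD : 0 < D)
    (Q : EuclideanSpace ℝ (Fin D) → ℝ) (θ θ' : EuclideanSpace ℝ (Fin D))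
    (hQ : DifferentiableAt ℝ Q θ')
    (hle : Q θ ≤ Q θ') :
    Tendsto
      (fun α : ℝ =>
        (1 / (α * (1 - α))) * (max (Q θ) (Q θ') - Q ((1 - α) • θ + α • θ')))
      (nhdsWithin 1 (Set.Ioo (0 : ℝ) 1))
      (nhds (-(fderiv ℝ Q θ' (θ - θ')))) := by
  set v := θ - θ' with hv
  set L := fderiv ℝ Q θ' v with hLdef
  set g : ℝ → ℝ := fun t => Q (θ' + t • v) with hg
  have hc : HasDerivAt (fun t : ℝ => θ' + t • v) v 0 := by
    simpa using ((hasDerivAt_id (0 : ℝ)).smul_const v).const_add θ'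
  have hg' : HasDerivAt g L 0 := by
    have hQ' : HasFDerivAt Q (fderiv ℝ Q θ') ((0:ℝ) • v + θ') := by
      simpa using hQ.hasFDerivAt
    have hQ'' : HasFDerivAt Q (fderiv ℝ Q θ') (θ' + (0:ℝ) • v) := by
      simpa [add_comm] using hQ'
    exact hQ''.comp_hasDerivAt 0 hc
  have hslope : Tendsto (slope g 0) (nhdsWithin 0 {(0:ℝ)}ᶜ) (nhds L) :=
    hasDerivAt_iff_tendsto_slope.1 hg'
  have hmap : Tendsto (fun α : ℝ => 1 - α) (nhdsWithin 1 (Set.Ioo (0:ℝ) 1))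
      (nhdsWithin 0 {(0:ℝ)}ᶜ) := by
    apply tendsto_nhdsWithin_of_tendsto_nhds_of_eventually_within
    · have h0 : Tendsto (fun α : ℝ => 1 - α) (nhds 1) (nhds (1 - 1)) :=
        tendsto_const_nhds.sub tendsto_id
      simpa using h0.mono_left nhdsWithin_le_nhds
    · filter_upwards [self_mem_nhdsWithin] with α hα
      exact sub_ne_zero.2 (ne_of_gt hα.2)
  have ha : Tendsto (fun α : ℝ => -(1 / α)) (nhdsWithin 1 (Set.Ioo (0:ℝ) 1))
      (nhds (-1)) := by
    have : ContinuousAt (fun α : ℝ => -(1 / α)) 1 := by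
      have h1 : ContinuousAt (fun α : ℝ => (1:ℝ) / α) 1 :=
        (continuousAt_const.div continuousAt_id one_ne_zero)
      exact h1.neg
    simpa using this.tendsto.mono_left nhdsWithin_le_nhds
  have h1 : Tendsto (fun α : ℝ => -(1 / α) * slope g 0 (1 - α))
      (nhdsWithin 1 (Set.Ioo (0:ℝ) 1)) (nhds (-L)) := by
    have := ha.mul (hslope.comp hmap)
    simpa [neg_one_mul] using this
  refine h1.congr' ?_
  filter_upwards [self_mem_nhdsWithin] with α hα
  have hα0 : α ≠ 0 := ne_of_gt hα.1
  have hα1 : (1 : ℝ) - α ≠ 0 := sub_ne_zero.2 (ne_of_gt hα.2)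
  have hpt : θ' + (1 - α) • v = (1 - α) • θ + α • θ' := by
    rw [hv]; module
  have hmax : max (Q θ) (Q θ') = Q θ' := max_eq_right hle
  rw [slope_def_field]
  simp only [hg, hpt, hmax, div_eq_mul_inv]
  field_simp
  simp only [zero_smul, add_zero, sub_zero]
  ring
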